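/- Let A ⊆ ℝ be an open set and let Γ be a move semigroup with dom(Γ) ⊆ A and im(Γ) ⊆ A. Then joinextend_A(Γ) is a move semigroup that satisfies axiom (extend_A). -/

import Mathlib

open Filter Set

noncomputable section

/-- The unrestricted translation (`b = false`) or reflection (`b = true`)
with parameter `p`: `x ↦ x + p`, resp. `x ↦ p - x`. -/
def uEval (b : Bool) (p : ℝ) (x : ℝ) : ℝ := if b then p - x else x + p

/-- A restricted move `γ|_D`: a translation (`isRefl = false`) or a
reflection (`isRefl = true`) together with a domain. -/
structure Move where
  isRefl : Bool
  param : ℝ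
  dom : Set ℝ

namespace Move

def eval (m : Move) : ℝ → ℝ := uEval m.isRefl m.param

/-- The character: `+1` for translations, `-1` for reflections. -/
def chi (m : Move) : ℝ := if m.isRefl then -1 else 1

def image (m : Move) : Set ℝ := m.eval '' m.dom

def graph (m : Move) : Set (ℝ × ℝ) := (fun x => (x, m.eval x)) '' m.dom

/-- Domains of moves must be open intervals or empty. -/
def ValidDom (D : Set ℝ) : Prop := IsOpen D ∧ D.OrdConnected

/-- A valid move: open-interval-or-empty domain; moves with empty domain are
normalized (`param = 0`), so that there are exactly two empty moves, one of
each character. -/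
def Valid (m : Move) : Prop := ValidDom m.dom ∧ (m.dom = ∅ → m.param = 0)

/-- The move `γ|_D` (normalized representative). -/
def mk' (b : Bool) (p : ℝ) (D : Set ℝ) : Move :=
  letI : Decidable (D = ∅) := Classical.dec _
  ⟨b, if D = ∅ then 0 else p, D⟩

/-- Composition of moves: `γ₂|_{D₂} ∘ γ₁|_{D₁} = (γ₂ ∘ γ₁)|_{D₁ ∩ γ₁⁻¹ D₂}`. -/
def comp (m2 m1 : Move) : Move :=
  mk' (m2.isRefl != m1.isRefl)
    (if m2.isRefl then m2.param - m1.param else m1.param + m2.param)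
    (m1.dom ∩ m1.eval ⁻¹' m2.dom)

/-- Inverse of a move: `(γ|_D)⁻¹ = γ⁻¹|_{γ(D)}`. -/
def inv (m : Move) : Move :=
  mk' m.isRefl (if m.isRefl then m.param else -m.param) (m.eval '' m.dom)

/-- The restriction partial order: `m1` is a restriction of `m2`. -/
def le (m1 m2 : Move) : Prop :=
  m1.isRefl = m2.isRefl ∧ m1.dom ⊆ m2.dom ∧ ∀ x ∈ m1.dom, m1.eval x = m2.eval x

end Move

/-- A move ensemble: a set of (valid) moves. -/
def IsMoveEnsemble (Ω : Set Move) : Prop := ∀ m ∈ Ω, m.Valid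

/-- A move semigroup: a move ensemble closed under composition and inverse. -/
def IsMoveSemigroup (Γ : Set Move) : Prop :=
  IsMoveEnsemble Γ ∧ (∀ m1 ∈ Γ, ∀ m2 ∈ Γ, Move.comp m2 m1 ∈ Γ) ∧
    (∀ m ∈ Γ, Move.inv m ∈ Γ)

/-- `⟨Ω⟩`: the smallest move semigroup containing `Ω`. -/
def semi (Ω : Set Move) : Set Move := ⋂₀ {Γ | IsMoveSemigroup Γ ∧ Ω ⊆ Γ}

/-- Axiom (restrict). -/
def RestrictClosed (Ω : Set Move) : Prop :=
  ∀ m ∈ Ω, ∀ D' : Set ℝ, D' ⊆ m.dom → Move.ValidDom D' →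
    Move.mk' m.isRefl m.param D' ∈ Ω

/-- The restriction closure of an ensemble. -/
def restrictCl (Ω : Set Move) : Set Move := ⋂₀ {Γ | RestrictClosed Γ ∧ Ω ⊆ Γ}

/-- Join-closed: restriction-closed and closed under continuation (joins). -/
def JoinClosed (Ω : Set Move) : Prop :=
  RestrictClosed Ω ∧
    ∀ (b : Bool) (p : ℝ) (J : Set (Set ℝ)), J.Nonempty →
      (∀ I ∈ J, Move.mk' b p I ∈ Ω) → (⋃₀ J).OrdConnected →
      Move.mk' b p (⋃₀ J) ∈ Ω

/-- `join(Ω)`: the smallest join-closed ensemble containing `Ω`. -/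
def joinCl (Ω : Set Move) : Set Move := ⋂₀ {Γ | JoinClosed Γ ∧ Ω ⊆ Γ}

/-- `joinsemi(Ω) = join(⟨Ω⟩)`: the joined move semigroup generated by `Ω`. -/
def joinsemi (Ω : Set Move) : Set Move := joinCl (semi Ω)

/-- `θ` respects the move `γ|_D`: `θ(γ(x)) = χ(γ)·θ(x) + c` on `D`. -/
def Respects (θ : ℝ → ℝ) (m : Move) : Prop :=
  ∃ c : ℝ, ∀ x ∈ m.dom, θ (m.eval x) = m.chi * θ x + c

/-- `θ` respects each move of the ensemble `Ω`. -/
def RespectsAll (θ : ℝ → ℝ) (Ω : Set Move) : Prop := ∀ m ∈ Ω, Respects θ m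

/-- All translation moves with graph contained in `O`. -/
def tMoves (O : Set (ℝ × ℝ)) : Set Move :=
  {m | m.isRefl = false ∧ m.Valid ∧ m.graph ⊆ O}

/-- All reflection moves with graph contained in `O`. -/
def rMoves (O : Set (ℝ × ℝ)) : Set Move :=
  {m | m.isRefl = true ∧ m.Valid ∧ m.graph ⊆ O}

/-- All moves with graph contained in `O`. -/
def movesIn (O : Set (ℝ × ℝ)) : Set Move := {m | m.Valid ∧ m.graph ⊆ O}

/-- Translation moves graph of an ensemble. -/
def grPlus (Ω : Set Move) : Set (ℝ × ℝ) :=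
  {q | ∃ m ∈ Ω, m.isRefl = false ∧ q ∈ m.graph}

/-- Reflection moves graph of an ensemble. -/
def grMinus (Ω : Set Move) : Set (ℝ × ℝ) :=
  {q | ∃ m ∈ Ω, m.isRefl = true ∧ q ∈ m.graph}

/-- `dom(O)`: union of the domains of the moves in `movesIn O`. -/
def domOf (O : Set (ℝ × ℝ)) : Set ℝ := {x | ∃ m ∈ movesIn O, x ∈ m.dom}

/-- `im(O)`: union of the images of the moves in `movesIn O`. -/
def imOf (O : Set (ℝ × ℝ)) : Set ℝ := {x | ∃ m ∈ movesIn O, x ∈ m.image}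

/-- domain of a move ensemble. -/
def domEns (Ω : Set Move) : Set ℝ := {x | ∃ m ∈ Ω, x ∈ m.dom}

/-- image of a move ensemble. -/
def imEns (Ω : Set Move) : Set ℝ := {x | ∃ m ∈ Ω, x ∈ m.image}

/-- Convergence of a sequence of unrestricted moves (character, parameter):
all but finitely many have character `b`, and the parameters tend to `p`. -/
def ConvergesTo (γ : ℕ → Bool × ℝ) (b : Bool) (p : ℝ) : Prop :=
  (∀ᶠ i in atTop, (γ i).1 = b) ∧ Tendsto (fun i => (γ i).2) atTop (nhds p)

/-- Axiom (lim): fixed-domain limits of moves. -/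
def LimClosed (Ω : Set Move) : Prop :=
  ∀ D : Set ℝ, Move.ValidDom D →
    ∀ (γ : ℕ → Bool × ℝ) (b : Bool) (p : ℝ), ConvergesTo γ b p →
      (∀ i, Move.mk' (γ i).1 (γ i).2 D ∈ Ω) → Move.mk' b p D ∈ Ω

/-- `lim(Ω)`: the smallest superset of `Ω` satisfying (lim). -/
def limCl (Ω : Set Move) : Set Move := ⋂₀ {Γ | LimClosed Γ ∧ Ω ⊆ Γ}

/-- Axiom (arblim): limits of moves with converging domains. -/
def ArbLimClosed (Ω : Set Move) : Prop :=
  ∀ (γ : ℕ → Bool × ℝ) (b : Bool) (p : ℝ) (l u : ℕ → ℝ) (l₀ u₀ : ℝ),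
    ConvergesTo γ b p → Tendsto l atTop (nhds l₀) → Tendsto u atTop (nhds u₀) →
    (∀ i, Move.mk' (γ i).1 (γ i).2 (Set.Ioo (l i) (u i)) ∈ Ω) →
    Move.mk' b p (Set.Ioo l₀ u₀) ∈ Ω

/-- `arblim(Ω)`: the smallest superset of `Ω` satisfying (arblim). -/
def arblimCl (Ω : Set Move) : Set Move := ⋂₀ {Γ | ArbLimClosed Γ ∧ Ω ⊆ Γ}

/-- Axiom (kaleido). -/
def Kaleidoscopic (Ω : Set Move) : Prop :=
  ∀ D I : Set ℝ, Move.ValidDom D → Move.ValidDom I →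
    (tMoves (D ×ˢ I) ⊆ Ω ↔ rMoves (D ×ˢ I) ⊆ Ω)

/-- Axiom (extend_A): continuous domain extension relative to the open set `A`. -/
def ExtendClosed (A : Set ℝ) (Ω : Set Move) : Prop :=
  ∀ (b : Bool) (p : ℝ) (J : Set (Set ℝ)) (D : Set ℝ), J.Nonempty →
    (∀ I ∈ J, Move.mk' b p I ∈ Ω) → Move.ValidDom D →
    D ⊆ closure (⋃₀ J) ∩ A ∩ uEval b p ⁻¹' A →
    Move.mk' b p D ∈ Ω

/-- `joinextend_A(Ω)`: the smallest superset of `Ω` satisfying (extend_A). -/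
def joinExtendCl (A : Set ℝ) (Ω : Set Move) : Set Move :=
  ⋂₀ {Γ | ExtendClosed A Γ ∧ Ω ⊆ Γ}

/-- A closed move semigroup with respect to the open set `A`. -/
def ClosedMoveSemigroup (A : Set ℝ) (Γ : Set Move) : Prop :=
  IsMoveSemigroup Γ ∧ JoinClosed Γ ∧ Kaleidoscopic Γ ∧ LimClosed Γ ∧
    ExtendClosed A Γ

/-- The moves closure `ctscl(Ω)`: the smallest closed move semigroup
(with respect to `A`) containing `Ω`. -/
def ctscl (A : Set ℝ) (Ω : Set Move) : Set Move :=
  ⋂₀ {Γ | ClosedMoveSemigroup A Γ ∧ Ω ⊆ Γ}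

/-- The set of maximal elements of `Ω` in the restriction partial order. -/
def MaxOf (Ω : Set Move) : Set Move :=
  {m ∈ Ω | ∀ m' ∈ Ω, Move.le m m' → Move.le m' m}

section Aux

lemma uEval_comp (b2 b1 : Bool) (p2 p1 x : ℝ) :
    uEval b2 p2 (uEval b1 p1 x)
      = uEval (b2 != b1) (if b2 then p2 - p1 else p1 + p2) x := by
  cases b2 <;> cases b1 <;> simp [uEval] <;> ring

lemma uEval_left_inv (b : Bool) (p x : ℝ) :
    uEval b (if b then p else -p) (uEval b p x) = x := by
  cases b <;> simp [uEval]

lemma uEval_right_inv (b : Bool) (p x : ℝ) :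
    uEval b p (uEval b (if b then p else -p) x) = x := by
  cases b <;> simp [uEval]

lemma uEval_false (p x : ℝ) : uEval false p x = x + p := by simp [uEval]

lemma uEval_true (p x : ℝ) : uEval true p x = p - x := by simp [uEval]

lemma continuous_uEval (b : Bool) (p : ℝ) : Continuous (uEval b p) := by
  cases b
  · have h : uEval false p = fun x => x + p := by funext x; simp [uEval]
    rw [h]; fun_prop
  · have h : uEval true p = fun x => p - x := by funext x; simp [uEval]
    rw [h]; fun_prop

def uHomeo (b : Bool) (p : ℝ) : ℝ ≃ₜ ℝ where
  toFun := uEval b p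
  invFun := uEval b (if b then p else -p)
  left_inv := uEval_left_inv b p
  right_inv := uEval_right_inv b p
  continuous_toFun := continuous_uEval b p
  continuous_invFun := continuous_uEval b _

lemma uHomeo_coe (b : Bool) (p : ℝ) : (uHomeo b p : ℝ → ℝ) = uEval b p := rfl

lemma uHomeo_symm_coe (b : Bool) (p : ℝ) :
    ((uHomeo b p).symm : ℝ → ℝ) = uEval b (if b then p else -p) := rfl

lemma image_uEval (b : Bool) (p : ℝ) (S : Set ℝ) :
    uEval b p '' S = uEval b (if b then p else -p) ⁻¹' S :=
  (uHomeo b p).toEquiv.image_eq_preimage_symm S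

lemma ordConnected_preimage_uEval (b : Bool) (p : ℝ) {S : Set ℝ}
    (hS : S.OrdConnected) : (uEval b p ⁻¹' S).OrdConnected := by
  constructor
  intro x hx y hy z hz
  simp only [Set.mem_Icc] at hz
  cases b with
  | false =>
    refine hS.out hx hy ?_
    simp only [uEval_false, Set.mem_Icc]
    constructor <;> linarith [hz.1, hz.2]
  | true =>
    refine hS.out hy hx ?_
    simp only [uEval_true, Set.mem_Icc]
    constructor <;> linarith [hz.1, hz.2]

lemma validDom_preimage_uEval (b : Bool) (p : ℝ) {S : Set ℝ}
    (hS : Move.ValidDom S) : Move.ValidDom (uEval b p ⁻¹' S) :=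
  ⟨hS.1.preimage (uHomeo b p).continuous, ordConnected_preimage_uEval b p hS.2⟩

lemma validDom_image_uEval (b : Bool) (p : ℝ) {S : Set ℝ}
    (hS : Move.ValidDom S) : Move.ValidDom (uEval b p '' S) := by
  rw [image_uEval]; exact validDom_preimage_uEval _ _ hS

lemma validDom_inter {S T : Set ℝ} (hS : Move.ValidDom S) (hT : Move.ValidDom T) :
    Move.ValidDom (S ∩ T) :=
  ⟨hS.1.inter hT.1, hS.2.inter hT.2⟩

lemma mk'_dom (b : Bool) (p : ℝ) (D : Set ℝ) : (Move.mk' b p D).dom = D := rfl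

lemma mk'_isRefl (b : Bool) (p : ℝ) (D : Set ℝ) : (Move.mk' b p D).isRefl = b := rfl

lemma mk'_empty (b : Bool) (p q : ℝ) : Move.mk' b p ∅ = Move.mk' b q ∅ := by
  simp [Move.mk']

lemma mk'_of_ne (b : Bool) (p : ℝ) {D : Set ℝ} (h : D ≠ ∅) :
    Move.mk' b p D = ⟨b, p, D⟩ := by
  simp [Move.mk', h]

lemma mk'_valid (b : Bool) (p : ℝ) {D : Set ℝ} (hD : Move.ValidDom D) :
    (Move.mk' b p D).Valid := by
  refine ⟨hD, fun h => ?_⟩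
  simp only [Move.mk'] at h ⊢
  simp [h]

lemma mk'_image (b : Bool) (p : ℝ) (D : Set ℝ) :
    (Move.mk' b p D).image = uEval b p '' D := by
  by_cases h : D = ∅
  · subst h; simp [Move.image, Move.mk', Move.eval]
  · rw [mk'_of_ne b p h]; rfl

lemma comp_mk'_right (m2 : Move) (b : Bool) (p : ℝ) (D : Set ℝ) :
    Move.comp m2 (Move.mk' b p D)
      = Move.mk' (m2.isRefl != b) (if m2.isRefl then m2.param - p else p + m2.param)
          (D ∩ uEval b p ⁻¹' m2.dom) := by
  by_cases h : D = ∅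
  · subst h
    simp only [Move.comp, Move.mk', Move.eval]
    simp
  · rw [mk'_of_ne b p h]; rfl

lemma comp_mk'_left (b : Bool) (p : ℝ) (D : Set ℝ) (m1 : Move) :
    Move.comp (Move.mk' b p D) m1
      = Move.mk' (b != m1.isRefl) (if b then p - m1.param else m1.param + p)
          (m1.dom ∩ m1.eval ⁻¹' D) := by
  by_cases h : D = ∅
  · subst h
    simp only [Move.comp, Move.mk', Move.eval]
    simp
  · rw [mk'_of_ne b p h]; rfl

lemma inv_mk' (b : Bool) (p : ℝ) (D : Set ℝ) :
    Move.inv (Move.mk' b p D)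
      = Move.mk' b (if b then p else -p) (uEval b p '' D) := by
  by_cases h : D = ∅
  · subst h
    simp only [Move.inv, Move.mk', Move.eval]
    simp
  · rw [mk'_of_ne b p h]; rfl

lemma joinExtendCl_extendClosed (A : Set ℝ) (Γ : Set Move) :
    ExtendClosed A (joinExtendCl A Γ) := by
  intro b p J D hJ hmem hD hsub
  intro Δ hΔ
  exact hΔ.1 b p J D hJ (fun I hI => hmem I hI Δ hΔ) hD hsub

lemma subset_joinExtendCl (A : Set ℝ) (Γ : Set Move) : Γ ⊆ joinExtendCl A Γ :=
  fun m hm Δ hΔ => hΔ.2 hm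

lemma joinExtendCl_min {A : Set ℝ} {Γ Δ : Set Move} (h1 : ExtendClosed A Δ)
    (h2 : Γ ⊆ Δ) : joinExtendCl A Γ ⊆ Δ :=
  fun m hm => hm Δ ⟨h1, h2⟩

end Aux

/-- The extension closure of a move semigroup with domain and image in the
open set `A` is a move semigroup satisfying (extend_A). -/
theorem joinExtendCl_isMoveSemigroup (A : Set ℝ) (hA : IsOpen A)
    (Γ : Set Move) (hΓ : IsMoveSemigroup Γ)
    (hdom : domEns Γ ⊆ A) (him : imEns Γ ⊆ A) :
    IsMoveSemigroup (joinExtendCl A Γ) ∧ ExtendClosed A (joinExtendCl A Γ) := by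
  set P := joinExtendCl A Γ with hPdef
  have hPext : ExtendClosed A P := joinExtendCl_extendClosed A Γ
  have hΓP : Γ ⊆ P := subset_joinExtendCl A Γ
  have hgood : ∀ m ∈ P, m.Valid ∧ m.dom ⊆ A ∧ m.image ⊆ A := by
    have hG : ExtendClosed A {m : Move | m.Valid ∧ m.dom ⊆ A ∧ m.image ⊆ A} := by
      intro b p J D hJ hmem hD hsub
      refine ⟨mk'_valid b p hD, ?_, ?_⟩
      · rw [mk'_dom]
        exact fun x hx => (hsub hx).1.2
      · rw [mk'_image]
        rintro y ⟨x, hx, rfl⟩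
        exact (hsub hx).2
    have hΓG : Γ ⊆ {m : Move | m.Valid ∧ m.dom ⊆ A ∧ m.image ⊆ A} :=
      fun m hm => ⟨hΓ.1 m hm, fun x hx => hdom ⟨m, hm, hx⟩,
        fun x hx => him ⟨m, hm, hx⟩⟩
    exact fun m hm => joinExtendCl_min hG hΓG hm
  have hinv : ∀ m ∈ P, m.inv ∈ P := by
    have hΩext : ExtendClosed A {m | m ∈ P ∧ m.inv ∈ P} := by
      intro b p J D hJ hmem hD hsub
      refine ⟨hPext b p J D hJ (fun I hI => (hmem I hI).1) hD hsub, ?_⟩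
      rw [inv_mk']
      refine hPext b (if b then p else -p) ((Set.image (uEval b p)) '' J)
        (uEval b p '' D) (hJ.image _) ?_ (validDom_image_uEval b p hD) ?_
      · rintro I' ⟨I, hI, rfl⟩
        rw [← inv_mk']
        exact (hmem I hI).2
      · rintro y ⟨x, hx, rfl⟩
        have h1 := hsub hx
        refine ⟨⟨?_, h1.2⟩, ?_⟩
        · have hU : ⋃₀ ((Set.image (uEval b p)) '' J) = uEval b p '' ⋃₀ J :=
            Set.image_sUnion.symm
          have key : uEval b p '' closure (⋃₀ J) = closure (uEval b p '' ⋃₀ J) :=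
            (uHomeo b p).image_closure _
          rw [hU, ← key]
          exact ⟨x, h1.1.1, rfl⟩
        · show uEval b (if b then p else -p) (uEval b p x) ∈ A
          rw [uEval_left_inv]
          exact h1.1.2
    have hPΩ : P ⊆ {m | m ∈ P ∧ m.inv ∈ P} :=
      joinExtendCl_min hΩext (fun m hm => ⟨hΓP hm, hΓP (hΓ.2.2 m hm)⟩)
    exact fun m hm => (hPΩ hm).2
  have extR : ∀ m2 ∈ P, ∀ (b : Bool) (p : ℝ) (J : Set (Set ℝ)) (D : Set ℝ),
      J.Nonempty → (∀ I ∈ J, Move.comp m2 (Move.mk' b p I) ∈ P) → Move.ValidDom D →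
      D ⊆ closure (⋃₀ J) ∩ A ∩ uEval b p ⁻¹' A →
      Move.comp m2 (Move.mk' b p D) ∈ P := by
    intro m2 hm2 b p J D hJ hmem hD hsub
    obtain ⟨hv2, hd2, hi2⟩ := hgood m2 hm2
    rw [comp_mk'_right]
    refine hPext _ _ ((fun I => I ∩ uEval b p ⁻¹' m2.dom) '' J) _ (hJ.image _) ?_
      (validDom_inter hD (validDom_preimage_uEval b p hv2.1)) ?_
    · rintro I' ⟨I, hI, rfl⟩
      rw [← comp_mk'_right]
      exact hmem I hI
    · rintro x ⟨hxD, hxm⟩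
      have h1 := hsub hxD
      refine ⟨⟨?_, h1.1.2⟩, ?_⟩
      · have hU : ⋃₀ ((fun I => I ∩ uEval b p ⁻¹' m2.dom) '' J)
            = (uEval b p ⁻¹' m2.dom) ∩ ⋃₀ J := by
          ext y; simp only [Set.sUnion_image, Set.mem_iUnion, Set.mem_inter_iff,
            Set.mem_sUnion]; tauto
        rw [hU]
        have hopen : IsOpen (uEval b p ⁻¹' m2.dom) :=
          hv2.1.1.preimage (continuous_uEval b p)
        exact hopen.inter_closure ⟨hxm, h1.1.1⟩
      · show uEval (m2.isRefl != b)
            (if m2.isRefl then m2.param - p else p + m2.param) x ∈ A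
        rw [← uEval_comp]
        exact hi2 ⟨uEval b p x, hxm, rfl⟩
  have extL : ∀ m1 ∈ P, ∀ (b : Bool) (p : ℝ) (J : Set (Set ℝ)) (D : Set ℝ),
      J.Nonempty → (∀ I ∈ J, Move.comp (Move.mk' b p I) m1 ∈ P) → Move.ValidDom D →
      D ⊆ closure (⋃₀ J) ∩ A ∩ uEval b p ⁻¹' A →
      Move.comp (Move.mk' b p D) m1 ∈ P := by
    intro m1 hm1 b p J D hJ hmem hD hsub
    obtain ⟨hv1, hd1, hi1⟩ := hgood m1 hm1
    rw [comp_mk'_left]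
    refine hPext _ _ ((fun I => m1.dom ∩ m1.eval ⁻¹' I) '' J) _ (hJ.image _) ?_
      (validDom_inter hv1.1 (validDom_preimage_uEval m1.isRefl m1.param hD)) ?_
    · rintro I' ⟨I, hI, rfl⟩
      rw [← comp_mk'_left]
      exact hmem I hI
    · rintro x ⟨hxd, hxD⟩
      have h1 := hsub hxD
      refine ⟨⟨?_, hd1 hxd⟩, ?_⟩
      · have hU : ⋃₀ ((fun I => m1.dom ∩ m1.eval ⁻¹' I) '' J)
            = m1.dom ∩ m1.eval ⁻¹' ⋃₀ J := by
          ext y; simp only [Set.sUnion_image, Set.mem_iUnion, Set.mem_inter_iff,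
            Set.mem_preimage, Set.mem_sUnion]; tauto
        rw [hU]
        refine hv1.1.1.inter_closure ⟨hxd, ?_⟩
        have key : m1.eval ⁻¹' closure (⋃₀ J) = closure (m1.eval ⁻¹' ⋃₀ J) :=
          (uHomeo m1.isRefl m1.param).preimage_closure _
        rw [← key]
        exact h1.1.1
      · show uEval (b != m1.isRefl)
            (if b then p - m1.param else m1.param + p) x ∈ A
        rw [← uEval_comp]
        exact h1.2
  have h1 : ∀ m1 ∈ P, ∀ m2 ∈ Γ, Move.comp m2 m1 ∈ P := by
    have hext : ExtendClosed A {m | m ∈ P ∧ ∀ m2 ∈ Γ, Move.comp m2 m ∈ P} := by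
      intro b p J D hJ hmem hD hsub
      refine ⟨hPext b p J D hJ (fun I hI => (hmem I hI).1) hD hsub, ?_⟩
      intro m2 hm2
      exact extR m2 (hΓP hm2) b p J D hJ (fun I hI => (hmem I hI).2 m2 hm2) hD hsub
    have hsubΓ : Γ ⊆ {m | m ∈ P ∧ ∀ m2 ∈ Γ, Move.comp m2 m ∈ P} :=
      fun m hm => ⟨hΓP hm, fun m2 hm2 => hΓP (hΓ.2.1 m hm m2 hm2)⟩
    exact fun m1 hm1 => (joinExtendCl_min hext hsubΓ hm1).2
  have hcomp : ∀ m2 ∈ P, ∀ m1 ∈ P, Move.comp m2 m1 ∈ P := by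
    have hext : ExtendClosed A {m | m ∈ P ∧ ∀ m1 ∈ P, Move.comp m m1 ∈ P} := by
      intro b p J D hJ hmem hD hsub
      refine ⟨hPext b p J D hJ (fun I hI => (hmem I hI).1) hD hsub, ?_⟩
      intro m1 hm1
      exact extL m1 hm1 b p J D hJ (fun I hI => (hmem I hI).2 m1 hm1) hD hsub
    have hsubΓ : Γ ⊆ {m | m ∈ P ∧ ∀ m1 ∈ P, Move.comp m m1 ∈ P} :=
      fun m hm => ⟨hΓP hm, fun m1 hm1 => h1 m1 hm1 m hm⟩
    exact fun m2 hm2 => (joinExtendCl_min hext hsubΓ hm2).2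
  exact ⟨⟨fun m hm => (hgood m hm).1,
    fun m1 hm1 m2 hm2 => hcomp m2 hm2 m1 hm1, hinv⟩, hPext⟩
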